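/- arXiv:2005.04575 — 2 statements merged into one kernel-verified Lean document; each statement's English description precedes it below -/
import Mathlib

section
/- The function ψ(x) = (2/x²)∫₀ˣ log(1+y) dy satisfies ψ(x) ≥ 1/(1 + x/3) for all x ≥ -1 (with x ≠ 0 interpreted by continuity ψ(0) = 1). -/
open Real

/-- The function ψ appearing in the Dzhaparidze-van Zanten inequality,
with the convention ψ(0) = 1 (its limit by continuity). -/
noncomputable def psi (x : ℝ) : ℝ :=
  if x = 0 then 1 else (2 / x ^ 2) * ∫ y in (0 : ℝ)..x, Real.log (1 + y)

/-- Difference between `log (1+x)` and the rational lower bound. -/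
noncomputable def Dfun (y : ℝ) : ℝ :=
  Real.log (1 + y) - (6 * y + 5 * y ^ 2) / (2 * y ^ 2 + 8 * y + 6)

lemma hasDerivAt_Dfun {y : ℝ} (hy : -1 < y) :
    HasDerivAt Dfun (y ^ 3 / ((1 + y) ^ 2 * (3 + y) ^ 2)) y := by
  have h1 : (1 : ℝ) + y ≠ 0 := by linarith
  have h3 : (3 : ℝ) + y ≠ 0 := by linarith
  have hden : (2 * y ^ 2 + 8 * y + 6) ≠ 0 := by
    have : 2 * y ^ 2 + 8 * y + 6 = 2 * (1 + y) * (3 + y) := by ring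
    rw [this]; positivity
  have hlog : HasDerivAt (fun y : ℝ => Real.log (1 + y)) (1 / (1 + y)) y := by
    have h := (Real.hasDerivAt_log h1).comp y ((hasDerivAt_id y).const_add 1)
    simpa [one_div, Function.comp_def] using h
  have hn : HasDerivAt (fun y : ℝ => 6 * y + 5 * y ^ 2) (6 + 5 * (2 * y)) y := by
    have := (((hasDerivAt_id y).const_mul 6)).add ((hasDerivAt_pow 2 y).const_mul 5)
    simpa [Pi.add_def] using this
  have hd : HasDerivAt (fun y : ℝ => 2 * y ^ 2 + 8 * y + 6) (2 * (2 * y) + 8) y := by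
    have := ((((hasDerivAt_pow 2 y).const_mul 2)).add
      ((hasDerivAt_id y).const_mul 8)).add_const 6
    simpa using this
  have hq := hn.div hd hden
  have h := hlog.sub hq
  refine (show HasDerivAt Dfun _ y from h).congr_deriv ?_
  rw [show 2 * y ^ 2 + 8 * y + 6 = 2 * (1 + y) * (3 + y) by ring]
  field_simp
  ring

lemma Dfun_zero : Dfun 0 = 0 := by simp [Dfun]

lemma Dfun_nonneg {x : ℝ} (hx : -1 < x) : 0 ≤ Dfun x := by
  rcases le_or_gt 0 x with h0 | h0
  · have mono : MonotoneOn Dfun (Set.Ici (0 : ℝ)) := by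
      apply monotoneOn_of_deriv_nonneg (convex_Ici 0)
      · intro y hy
        exact (hasDerivAt_Dfun (by simp at hy; linarith)).continuousAt.continuousWithinAt
      · intro y hy
        rw [interior_Ici] at hy
        exact (hasDerivAt_Dfun (by simp at hy; linarith)).differentiableAt.differentiableWithinAt
      · intro y hy
        rw [interior_Ici] at hy
        simp only [Set.mem_Ioi] at hy
        rw [(hasDerivAt_Dfun (by linarith)).deriv]
        positivity
    have := mono Set.self_mem_Ici (Set.mem_Ici.2 h0) h0
    rwa [Dfun_zero] at this
  · have anti : AntitoneOn Dfun (Set.Icc x (0 : ℝ)) := by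
      apply antitoneOn_of_deriv_nonpos (convex_Icc x 0)
      · intro y hy
        simp only [Set.mem_Icc] at hy
        exact (hasDerivAt_Dfun (by linarith [hy.1])).continuousAt.continuousWithinAt
      · intro y hy
        rw [interior_Icc] at hy
        exact (hasDerivAt_Dfun (by linarith [hy.1])).differentiableAt.differentiableWithinAt
      · intro y hy
        rw [interior_Icc] at hy
        simp only [Set.mem_Ioo] at hy
        have hy1 : -1 < y := by linarith [hy.1]
        rw [(hasDerivAt_Dfun hy1).deriv]
        apply div_nonpos_of_nonpos_of_nonneg
        · have : y ^ 3 = y * y ^ 2 := by ring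
          rw [this]
          exact mul_nonpos_of_nonpos_of_nonneg (le_of_lt hy.2) (sq_nonneg y)
        · positivity
    have := anti (Set.mem_Icc.2 ⟨le_refl x, h0.le⟩) (Set.mem_Icc.2 ⟨h0.le, le_refl 0⟩) h0.le
    rwa [Dfun_zero] at this

/-- Pointwise lower bound on log. -/
lemma log_lb {x : ℝ} (hx : -1 < x) :
    (6 * x + 5 * x ^ 2) / (2 * x ^ 2 + 8 * x + 6) ≤ Real.log (1 + x) := by
  have := Dfun_nonneg hx
  unfold Dfun at this
  linarith

/-- Antiderivative of `log (1+y)`. -/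
noncomputable def Ffun (y : ℝ) : ℝ := (1 + y) * Real.log (1 + y) - y

lemma continuous_Ffun : Continuous Ffun := by
  have h : Continuous fun y : ℝ => (1 + y) * Real.log (1 + y) :=
    Real.continuous_mul_log.comp (continuous_const.add continuous_id)
  exact h.sub continuous_id

lemma hasDerivAt_Ffun {y : ℝ} (hy : -1 < y) :
    HasDerivAt Ffun (Real.log (1 + y)) y := by
  have h1 : (1 : ℝ) + y ≠ 0 := by linarith
  have hlog : HasDerivAt (fun y : ℝ => Real.log (1 + y)) (1 / (1 + y)) y := by
    have h := (Real.hasDerivAt_log h1).comp y ((hasDerivAt_id y).const_add 1)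
    simpa [one_div, Function.comp_def] using h
  have hmul := ((hasDerivAt_id y).const_add 1).mul hlog
  have h := hmul.sub (hasDerivAt_id y)
  refine (show HasDerivAt Ffun _ y from h).congr_deriv ?_
  field_simp
  simp only [id]; ring

lemma integral_log_one_add {x : ℝ} (hx : -1 ≤ x) :
    ∫ y in (0 : ℝ)..x, Real.log (1 + y) = (1 + x) * Real.log (1 + x) - x := by
  have hF0 : Ffun 0 = 0 := by simp [Ffun]
  rcases le_or_gt 0 x with h0 | h0
  · have hc : ContinuousOn (fun y : ℝ => Real.log (1 + y)) (Set.uIcc 0 x) := by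
      intro y hy
      rw [Set.uIcc_of_le h0] at hy
      have h1 : (1 : ℝ) + y ≠ 0 := by
        have := hy.1; linarith
      exact ((Real.continuousAt_log h1).comp
        ((continuous_const.add continuous_id).continuousAt)).continuousWithinAt
    have := intervalIntegral.integral_eq_sub_of_hasDeriv_right_of_le h0
      (continuous_Ffun.continuousOn)
      (fun y hy => (hasDerivAt_Ffun (by have := hy.1; linarith)).hasDerivWithinAt)
      (hc.intervalIntegrable)
    rw [this, hF0, Ffun]; ring
  · have hle : x ≤ 0 := h0.le
    have hint : IntervalIntegrable (fun y => Real.log (1 + y)) MeasureTheory.volume x 0 := by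
      rw [intervalIntegrable_iff_integrableOn_Ioc_of_le hle]
      have h := intervalIntegral.integrableOn_deriv_of_nonneg
        (g := fun y => -Ffun y) (g' := fun y => -Real.log (1 + y)) (a := x) (b := 0)
        (continuous_Ffun.neg.continuousOn)
        (fun y hy => (hasDerivAt_Ffun (by exact lt_of_le_of_lt hx hy.1)).neg)
        (fun y hy => by
          have h1 : 0 ≤ 1 + y := by linarith [lt_of_le_of_lt hx hy.1]
          have h2 : 1 + y ≤ 1 := by linarith [hy.2]
          simpa using Real.log_nonpos h1 h2)
      have h2 := h.neg
      simp only [Pi.neg_def, neg_neg] at h2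
      exact h2
    have heq := intervalIntegral.integral_eq_sub_of_hasDeriv_right_of_le hle
      (continuous_Ffun.continuousOn)
      (fun y hy => (hasDerivAt_Ffun (lt_of_le_of_lt hx hy.1)).hasDerivWithinAt)
      hint
    rw [intervalIntegral.integral_symm, heq, hF0, Ffun]
    ring

theorem stmt_3 (x : ℝ) (hx : -1 ≤ x) :
    1 / (1 + x / 3) ≤ psi x := by
  rcases eq_or_ne x 0 with h0 | h0
  · simp [psi, h0]
  · have hpsi : psi x = 2 / x ^ 2 * ((1 + x) * Real.log (1 + x) - x) := by
      rw [psi, if_neg h0, integral_log_one_add hx]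
    rw [hpsi]
    rcases eq_or_lt_of_le hx with hm1 | hm1
    · rw [← hm1]
      norm_num
    · -- -1 < x, x ≠ 0
      have h1 : (0 : ℝ) < 1 + x := by linarith
      have h3 : (0 : ℝ) < 3 + x := by linarith
      have hx2 : (0 : ℝ) < x ^ 2 := by positivity
      have hden : (0 : ℝ) < 2 * x ^ 2 + 8 * x + 6 := by nlinarith
      have hlog := log_lb hm1
      have hlog' : 6 * x + 5 * x ^ 2 ≤ (2 * x ^ 2 + 8 * x + 6) * Real.log (1 + x) := by
        rw [div_le_iff₀ hden] at hlog
        linarith [hlog]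
      have key : 3 * x ^ 2 ≤ 2 * (3 + x) * ((1 + x) * Real.log (1 + x) - x) := by
        nlinarith [hlog']
      have h13 : (0 : ℝ) < 1 + x / 3 := by linarith
      rw [div_le_iff₀ h13]
      rw [div_mul_eq_mul_div, div_mul_eq_mul_div, le_div_iff₀ hx2]
      nlinarith [key]
end

section
/- Let (ξ_i, 𝔉_i) be square-integrable martingale differences, S_n = Σ ξ_i, B_n(0) = Σ (ξ_i⁺)² + Σ E[(ξ_i⁻)² | 𝔉_{i-1}]. Then for all x, y > 0, P(S_n ≥ x B_n(0), B_n(0) ≥ y) ≤ exp{- x² y / 2}. -/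
open MeasureTheory Real Finset

lemma aux_deriv_bound (t : ℝ) : (1 - t) * Real.exp (t - t^2/2) ≤ 1 := by
  have h1 := Real.add_one_le_exp (t^2/2 - t)
  have h2 : Real.exp (t^2/2 - t) * Real.exp (t - t^2/2) = 1 := by
    rw [← Real.exp_add]; ring_nf; exact Real.exp_zero
  have h3 := Real.exp_pos (t - t^2/2)
  nlinarith [sq_nonneg t, Real.exp_pos (t^2/2 - t)]

lemma exp_le_one_add_of_nonneg {u : ℝ} (hu : 0 ≤ u) : Real.exp (u - u^2/2) ≤ 1 + u := by
  set g : ℝ → ℝ := fun t => 1 + t - Real.exp (t - t^2/2) with hg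
  have hd : ∀ t : ℝ, HasDerivAt g (1 - (1 - t) * Real.exp (t - t^2/2)) t := by
    intro t
    have h1 : HasDerivAt (fun s : ℝ => s - s^2/2) (1 - t) t := by
      have := ((hasDerivAt_pow 2 t).div_const 2)
      have h2 := (hasDerivAt_id t).sub this
      exact h2.congr_deriv (by norm_num)
    have h2 : HasDerivAt (fun s : ℝ => Real.exp (s - s^2/2))
        (Real.exp (t - t^2/2) * (1 - t)) t := h1.exp
    have h3 := ((hasDerivAt_const t (1:ℝ)).add (hasDerivAt_id t)).sub h2
    exact h3.congr_deriv (by ring)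
  have hmono : MonotoneOn g (Set.Ici 0) := by
    apply monotoneOn_of_deriv_nonneg (convex_Ici 0)
    · exact (Continuous.continuousOn (by fun_prop))
    · intro t ht
      exact (hd t).differentiableAt.differentiableWithinAt
    · intro t ht
      rw [(hd t).deriv]
      have := aux_deriv_bound t
      linarith
  have h0 : g 0 = 0 := by simp [hg]
  have := hmono (Set.mem_Ici.2 le_rfl) (Set.mem_Ici.2 hu) hu
  rw [h0] at this
  simp only [hg] at this
  linarith

lemma exp_le_quad_of_nonpos {u : ℝ} (hu : u ≤ 0) : Real.exp u ≤ 1 + u + u^2/2 := by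
  set g : ℝ → ℝ := fun t => 1 + t + t^2/2 - Real.exp t with hg
  have hd : ∀ t : ℝ, HasDerivAt g (1 + t - Real.exp t) t := by
    intro t
    have h1 : HasDerivAt (fun s : ℝ => 1 + s + s^2/2) (1 + t) t := by
      have := (((hasDerivAt_const t (1:ℝ)).add (hasDerivAt_id t)).add
        ((hasDerivAt_pow 2 t).div_const 2))
      exact this.congr_deriv (by norm_num)
    have h3 := h1.sub (Real.hasDerivAt_exp t)
    exact h3
  have hmono : AntitoneOn g (Set.Iic 0) := by
    apply antitoneOn_of_deriv_nonpos (convex_Iic 0)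
    · exact (Continuous.continuousOn (by fun_prop))
    · intro t ht
      exact (hd t).differentiableAt.differentiableWithinAt
    · intro t ht
      rw [(hd t).deriv]
      have := Real.add_one_le_exp t
      linarith
  have h0 : g 0 = 0 := by simp [hg]
  have := hmono (Set.mem_Iic.2 hu) (Set.mem_Iic.2 le_rfl) hu
  rw [h0] at this
  simp only [hg] at this
  linarith

lemma key_ineq {x : ℝ} (hx : 0 < x) (t : ℝ) :
    Real.exp (x * t - x^2/2 * (max t 0)^2) ≤ 1 + x * t + x^2/2 * (max (-t) 0)^2 := by
  rcases le_or_gt 0 t with h | h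
  · have h1 : max t 0 = t := max_eq_left h
    have h2 : max (-t) 0 = 0 := max_eq_right (by linarith)
    rw [h1, h2]
    have := exp_le_one_add_of_nonneg (u := x * t) (by positivity)
    have e : x * t - x^2/2 * t^2 = x*t - (x*t)^2/2 := by ring
    rw [e]; simpa using this
  · have h1 : max t 0 = 0 := max_eq_right h.le
    have h2 : max (-t) 0 = -t := max_eq_left (by linarith)
    rw [h1, h2]
    have := exp_le_quad_of_nonpos (u := x * t) (by nlinarith)
    have e : x * t - x^2/2 * 0^2 = x*t := by ring
    rw [e]
    nlinarith [this]

lemma key_bdd {x : ℝ} (hx : 0 < x) (t : ℝ) :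
    Real.exp (x * t - x^2/2 * (max t 0)^2) ≤ Real.exp (1/2) := by
  apply Real.exp_le_exp.2
  rcases le_or_gt 0 t with h | h
  · rw [max_eq_left h]; nlinarith [sq_nonneg (x*t - 1)]
  · rw [max_eq_right h.le]
    nlinarith

theorem stmt_9 {Ω : Type*} {m : MeasurableSpace Ω} {μ : Measure Ω} [IsProbabilityMeasure μ]
    (𝔉 : ℕ → MeasurableSpace Ω) (hle : ∀ i, 𝔉 i ≤ m) (hmono : Monotone 𝔉)
    (ξ : ℕ → Ω → ℝ)
    (hadp : ∀ i, StronglyMeasurable[𝔉 i] (ξ i))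
    (hsq : ∀ i, Integrable (fun ω => (ξ i ω) ^ 2) μ)
    (hmart : ∀ i : ℕ, 1 ≤ i → μ[ξ i | 𝔉 (i - 1)] =ᵐ[μ] 0)
    (n : ℕ) (x y : ℝ) (hx : 0 < x) (hy : 0 < y)
    (S B : Ω → ℝ)
    (hS : S = fun ω => ∑ i ∈ Finset.Icc 1 n, ξ i ω)
    (hB : B = fun ω =>
      (∑ i ∈ Finset.Icc 1 n, (max (ξ i ω) 0) ^ 2)
        + ∑ i ∈ Finset.Icc 1 n,
            (μ[fun ω' => (max (-(ξ i ω')) 0) ^ 2 | 𝔉 (i - 1)]) ω) :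
    (μ {ω | x * B ω ≤ S ω ∧ y ≤ B ω}).toReal ≤
      Real.exp (-(x ^ 2 * y) / 2) := by
  -- abbreviations
  set c : ℕ → Ω → ℝ := fun i => μ[fun ω' => (max (-(ξ i ω')) 0) ^ 2 | 𝔉 (i - 1)] with hc
  set F : ℕ → Ω → ℝ := fun i ω =>
    Real.exp (x * ξ i ω - x ^ 2 / 2 * (max (ξ i ω) 0) ^ 2)
      * Real.exp (-(x ^ 2 / 2) * c i ω) with hF
  set M : ℕ → Ω → ℝ := fun N ω => ∏ i ∈ Finset.Icc 1 N, F i ω with hM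
  -- basic measurability / integrability facts
  have hξm : ∀ i, StronglyMeasurable (ξ i) := fun i => (hadp i).mono (hle i)
  have hξint : ∀ i, Integrable (ξ i) μ := fun i =>
    ((memLp_two_iff_integrable_sq (hξm i).aestronglyMeasurable).2 (hsq i)).integrable
      (by norm_num)
  have hnegsq : ∀ (t : ℝ), (max (-t) 0) ^ 2 ≤ t ^ 2 := by
    intro t
    rcases le_total t 0 with h | h
    · rw [max_eq_left (by linarith), neg_sq]
    · rw [max_eq_right (by linarith)]; nlinarith [sq_nonneg t]
  have hnegm : ∀ i, StronglyMeasurable (fun ω => (max (-(ξ i ω)) 0) ^ 2) := fun i =>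
    (((hξm i).measurable.neg.max measurable_const).pow_const 2).stronglyMeasurable
  have hnegint : ∀ i, Integrable (fun ω => (max (-(ξ i ω)) 0) ^ 2) μ := by
    intro i
    refine (hsq i).mono' (hnegm i).aestronglyMeasurable (ae_of_all _ fun ω => ?_)
    rw [Real.norm_of_nonneg (by positivity)]
    exact hnegsq _
  have hcm : ∀ i, StronglyMeasurable[𝔉 (i - 1)] (c i) := fun i => stronglyMeasurable_condExp
  have hcnn : ∀ i, 0 ≤ᵐ[μ] c i := fun i =>
    condExp_nonneg (ae_of_all _ fun ω => by positivity)
  -- F measurability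
  have hFmeas : ∀ N i, i ≤ N → Measurable[𝔉 N] (F i) := by
    intro N i hiN
    have hξN : Measurable[𝔉 N] (ξ i) := ((hadp i).mono (hmono hiN)).measurable
    have hcN : Measurable[𝔉 N] (c i) :=
      ((hcm i).mono (hmono ((Nat.sub_le i 1).trans hiN))).measurable
    exact (((measurable_const.mul hξN).sub
        (measurable_const.mul ((hξN.max measurable_const).pow_const 2))).exp).mul
      ((measurable_const.mul hcN).exp)
  have hMmeas : ∀ N, Measurable[𝔉 N] (M N) := by
    intro N
    exact Finset.measurable_prod _ fun i hi => hFmeas N i (Finset.mem_Icc.1 hi).2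
  have hFpos : ∀ i ω, 0 < F i ω := fun i ω => mul_pos (Real.exp_pos _) (Real.exp_pos _)
  have hMpos : ∀ N ω, 0 < M N ω := fun N ω => Finset.prod_pos fun i _ => hFpos i ω
  have hFle : ∀ i, ∀ᵐ ω ∂μ, F i ω ≤ Real.exp (1/2) := by
    intro i
    filter_upwards [hcnn i] with ω hω
    have h1 : Real.exp (x * ξ i ω - x ^ 2 / 2 * (max (ξ i ω) 0) ^ 2) ≤ Real.exp (1/2) :=
      key_bdd hx _
    have h2 : Real.exp (-(x ^ 2 / 2) * c i ω) ≤ 1 := by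
      rw [← Real.exp_zero]
      apply Real.exp_le_exp.2
      have hw : (0:ℝ) ≤ c i ω := hω
      nlinarith [mul_nonneg (sq_nonneg x) hw]
    calc F i ω ≤ Real.exp (1/2) * 1 :=
          mul_le_mul h1 h2 (Real.exp_pos _).le (Real.exp_pos _).le
      _ = Real.exp (1/2) := mul_one _
  have hMle : ∀ N, ∀ᵐ ω ∂μ, M N ω ≤ Real.exp ((N : ℝ) * (1/2)) := by
    intro N
    have := ae_all_iff.2 hFle
    filter_upwards [this] with ω hω
    calc M N ω ≤ ∏ i ∈ Finset.Icc 1 N, Real.exp (1/2) :=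
          Finset.prod_le_prod (fun i _ => (hFpos i ω).le) (fun i _ => hω i)
      _ = Real.exp (1/2) ^ N := by rw [Finset.prod_const, Nat.card_Icc]; norm_num
      _ = Real.exp ((N : ℝ) * (1/2)) := by rw [← Real.exp_nat_mul]
  have hMint : ∀ N, Integrable (M N) μ := by
    intro N
    refine Integrable.mono' (integrable_const (Real.exp ((N : ℝ) * (1/2))))
      (((hMmeas N).mono (hle N) le_rfl).aestronglyMeasurable) ?_
    filter_upwards [hMle N] with ω hω
    rw [Real.norm_of_nonneg (hMpos N ω).le]
    exact hω
  -- the key supermartingale estimate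
  have key : ∀ N, ∫ ω, M N ω ∂μ ≤ 1 := by
    intro N
    induction N with
    | zero =>
        have h0 : M 0 = fun _ => (1:ℝ) := by
          funext ω; simp [hM]
        rw [h0, integral_const]
        simp
    | succ N ih =>
        have hcN1 : Measurable[𝔉 N] (c (N+1)) := by
          have := (hcm (N+1)).measurable
          simpa using this
        set φ : Ω → ℝ := fun ω => M N ω * Real.exp (-(x ^ 2 / 2) * c (N+1) ω) with hφ
        set ψ : Ω → ℝ := fun ω =>
          Real.exp (x * ξ (N+1) ω - x ^ 2 / 2 * (max (ξ (N+1) ω) 0) ^ 2) with hψ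
        have hstep : ∀ ω, M (N+1) ω = φ ω * ψ ω := by
          intro ω
          simp only [hM, hφ, hψ]
          rw [Finset.prod_Icc_succ_top (by omega)]
          simp only [hF]
          ring
        have hφm : Measurable[𝔉 N] φ :=
          (hMmeas N).mul ((measurable_const.mul hcN1).exp)
        have hφnn : ∀ ω, 0 ≤ φ ω := fun ω =>
          mul_nonneg (hMpos N ω).le (Real.exp_pos _).le
        have hφle : ∀ᵐ ω ∂μ, φ ω ≤ Real.exp ((N : ℝ) * (1/2)) := by
          filter_upwards [hMle N, hcnn (N+1)] with ω h1 h2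
          have h3 : Real.exp (-(x ^ 2 / 2) * c (N+1) ω) ≤ 1 := by
            rw [← Real.exp_zero]
            apply Real.exp_le_exp.2
            have hw : (0:ℝ) ≤ c (N+1) ω := h2
            nlinarith [mul_nonneg (sq_nonneg x) hw]
          calc φ ω ≤ Real.exp ((N : ℝ) * (1/2)) * 1 :=
                mul_le_mul h1 h3 (Real.exp_pos _).le
                  (le_trans (hMpos N ω).le h1)
            _ = _ := mul_one _
        have hψm : StronglyMeasurable ψ := by
          refine Measurable.stronglyMeasurable ?_
          have hm1 : Measurable (ξ (N+1)) := (hξm (N+1)).measurable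
          exact ((measurable_const.mul hm1).sub
            (measurable_const.mul ((hm1.max measurable_const).pow_const 2))).exp
        have hψpos : ∀ ω, 0 < ψ ω := fun ω => Real.exp_pos _
        have hψle : ∀ ω, ψ ω ≤ Real.exp (1/2) := fun ω => key_bdd hx _
        have hψint : Integrable ψ μ := by
          refine Integrable.mono' (integrable_const (Real.exp (1/2)))
            hψm.aestronglyMeasurable (ae_of_all _ fun ω => ?_)
          rw [Real.norm_of_nonneg (hψpos ω).le]
          exact hψle ω
        have hφψint : Integrable (φ * ψ) μ := by
          refine Integrable.mono'
            (integrable_const (Real.exp ((N : ℝ) * (1/2)) * Real.exp (1/2)))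
            ((((hφm.mono (hle N) le_rfl)).mul hψm.measurable).aestronglyMeasurable)
            ?_
          filter_upwards [hφle] with ω h1
          rw [Pi.mul_apply, Real.norm_of_nonneg (mul_nonneg (hφnn ω) (hψpos ω).le)]
          exact mul_le_mul h1 (hψle ω) (hψpos ω).le (by positivity)
        -- conditional expectation of ψ
        have hrhs_int : Integrable (fun ω => 1 + x * ξ (N+1) ω
            + x ^ 2 / 2 * (max (-(ξ (N+1) ω)) 0) ^ 2) μ := by
          refine Integrable.add (Integrable.add (integrable_const 1)
            ((hξint (N+1)).const_mul x)) ((hnegint (N+1)).const_mul (x^2/2))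
        have hsub : (N + 1 : ℕ) - 1 = N := by omega
        have hψcond : μ[ψ | 𝔉 N] ≤ᵐ[μ] fun ω => 1 + x ^ 2 / 2 * c (N+1) ω := by
          have step1 : μ[ψ | 𝔉 N] ≤ᵐ[μ] μ[(fun ω => 1 + x * ξ (N+1) ω
              + x ^ 2 / 2 * (max (-(ξ (N+1) ω)) 0) ^ 2) | 𝔉 N] :=
            condExp_mono hψint hrhs_int (ae_of_all _ fun ω => key_ineq hx _)
          have step2 : μ[(fun ω => 1 + x * ξ (N+1) ω
              + x ^ 2 / 2 * (max (-(ξ (N+1) ω)) 0) ^ 2) | 𝔉 N]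
              =ᵐ[μ] fun ω => 1 + x * (μ[ξ (N+1) | 𝔉 N]) ω + x ^ 2 / 2 * c (N+1) ω := by
            have e1 : (fun ω => 1 + x * ξ (N+1) ω
                + x ^ 2 / 2 * (max (-(ξ (N+1) ω)) 0) ^ 2)
                = ((fun _ => (1:ℝ)) + x • ξ (N+1))
                  + (x ^ 2 / 2) • (fun ω => (max (-(ξ (N+1) ω)) 0) ^ 2) := rfl
            rw [e1]
            refine (condExp_add (Integrable.add (integrable_const 1)
              ((hξint (N+1)).smul x)) (((hnegint (N+1)).smul (x^2/2))) (𝔉 N)).trans ?_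
            have h2 := condExp_add (μ := μ) (m := 𝔉 N) (integrable_const (1:ℝ))
              ((hξint (N+1)).smul x)
            have h3 := condExp_smul (μ := μ) (m := 𝔉 N) x (ξ (N+1))
            have h4 := condExp_smul (μ := μ) (m := 𝔉 N)
              (x^2/2) (fun ω => (max (-(ξ (N+1) ω)) 0) ^ 2)
            have h5 : μ[(fun _ => (1:ℝ)) | 𝔉 N] = fun _ => (1:ℝ) := condExp_const (hle N) 1
            have hcdef : μ[(fun ω => (max (-(ξ (N+1) ω)) 0) ^ 2) | 𝔉 N] = c (N+1) := by
              rw [hc]; simp [hsub]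
            filter_upwards [h2, h3, h4] with ω e2 e3 e4
            simp only [Pi.add_apply, Pi.smul_apply, smul_eq_mul] at *
            rw [e2, e3, e4, h5, hcdef]
          have step3 : (fun ω => 1 + x * (μ[ξ (N+1) | 𝔉 N]) ω + x ^ 2 / 2 * c (N+1) ω)
              =ᵐ[μ] fun ω => 1 + x ^ 2 / 2 * c (N+1) ω := by
            have hm0 : μ[ξ (N+1) | 𝔉 N] =ᵐ[μ] 0 := by
              have := hmart (N+1) (by omega)
              rwa [hsub] at this
            filter_upwards [hm0] with ω h0
            rw [h0]; simp
          exact step1.trans (Filter.EventuallyLE.trans step2.le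
            (Filter.EventuallyEq.le step3))
        -- condexp bound for integrability
        have hψcnn : 0 ≤ᵐ[μ] μ[ψ | 𝔉 N] :=
          condExp_nonneg (ae_of_all _ fun ω => (hψpos ω).le)
        have hψcle : μ[ψ | 𝔉 N] ≤ᵐ[μ] fun _ => Real.exp (1/2) := by
          have := condExp_mono (m := 𝔉 N) hψint (integrable_const (Real.exp (1/2)))
            (ae_of_all _ hψle)
          refine this.trans ?_
          rw [condExp_const (hle N)]
        have hφcint : Integrable (fun ω => φ ω * (μ[ψ | 𝔉 N]) ω) μ := by
          refine Integrable.mono'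
            (integrable_const (Real.exp ((N : ℝ) * (1/2)) * Real.exp (1/2)))
            (((hφm.mono (hle N) le_rfl).mul
              ((stronglyMeasurable_condExp.mono (hle N)).measurable)).aestronglyMeasurable)
            ?_
          filter_upwards [hφle, hψcnn, hψcle] with ω h1 h2 h3
          rw [Real.norm_of_nonneg (mul_nonneg (hφnn ω) h2)]
          exact mul_le_mul h1 h3 h2 (by positivity)
        -- putting things together
        have e0 : ∫ ω, M (N+1) ω ∂μ = ∫ ω, (φ * ψ) ω ∂μ := by
          congr 1; funext ω; rw [hstep ω]; rfl
        have e1 : ∫ ω, (φ * ψ) ω ∂μ = ∫ ω, (μ[φ * ψ | 𝔉 N]) ω ∂μ :=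
          (integral_condExp (hle N)).symm
        have e2 : ∫ ω, (μ[φ * ψ | 𝔉 N]) ω ∂μ = ∫ ω, φ ω * (μ[ψ | 𝔉 N]) ω ∂μ := by
          refine integral_congr_ae ?_
          have := condExp_mul_of_stronglyMeasurable_left hφm.stronglyMeasurable hφψint hψint
          filter_upwards [this] with ω h
          rw [h]; rfl
        have e3 : ∫ ω, φ ω * (μ[ψ | 𝔉 N]) ω ∂μ ≤ ∫ ω, M N ω ∂μ := by
          refine integral_mono_ae hφcint (hMint N) ?_
          filter_upwards [hψcond, hcnn (N+1)] with ω h1 h2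
          have hb1 : φ ω * (μ[ψ | 𝔉 N]) ω ≤ φ ω * (1 + x ^ 2 / 2 * c (N+1) ω) :=
            mul_le_mul_of_nonneg_left h1 (hφnn ω)
          have hb2 : (1 : ℝ) + x ^ 2 / 2 * c (N+1) ω ≤ Real.exp (x ^ 2 / 2 * c (N+1) ω) := by
            have := Real.add_one_le_exp (x ^ 2 / 2 * c (N+1) ω)
            linarith
          have hb3 : φ ω * (1 + x ^ 2 / 2 * c (N+1) ω)
              ≤ φ ω * Real.exp (x ^ 2 / 2 * c (N+1) ω) :=
            mul_le_mul_of_nonneg_left hb2 (hφnn ω)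
          have hb4 : φ ω * Real.exp (x ^ 2 / 2 * c (N+1) ω) = M N ω := by
            simp only [hφ]
            rw [mul_assoc, ← Real.exp_add]
            norm_num
          linarith
        rw [e0, e1, e2]
        exact le_trans e3 ih
  -- final Chebyshev step
  have hSm : Measurable S := by
    rw [hS]; exact Finset.measurable_sum _ fun i _ => (hξm i).measurable
  have hBm : Measurable B := by
    rw [hB]
    refine Measurable.add ?_ ?_
    · exact Finset.measurable_sum _ fun i _ =>
        (((hξm i).measurable.max measurable_const).pow_const 2)
    · exact Finset.measurable_sum _ fun i _ =>
        ((stronglyMeasurable_condExp.mono (hle (i-1))).measurable)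
  set A : Set Ω := {ω | x * B ω ≤ S ω ∧ y ≤ B ω} with hA
  have hAmeas : MeasurableSet A := by
    rw [hA]
    have : {ω | x * B ω ≤ S ω ∧ y ≤ B ω}
        = {ω | x * B ω ≤ S ω} ∩ {ω | y ≤ B ω} := rfl
    rw [this]
    exact (measurableSet_le (measurable_const.mul hBm) hSm).inter
      (measurableSet_le measurable_const hBm)
  have hMexp : ∀ ω, M n ω = Real.exp (x * S ω - x ^ 2 / 2 * B ω) := by
    intro ω
    calc M n ω = ∏ i ∈ Finset.Icc 1 n,
          Real.exp ((x * ξ i ω - x ^ 2 / 2 * (max (ξ i ω) 0) ^ 2)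
            + (-(x ^ 2 / 2) * c i ω)) := by
            apply Finset.prod_congr rfl
            intro i _
            rw [Real.exp_add]
      _ = Real.exp (∑ i ∈ Finset.Icc 1 n,
            ((x * ξ i ω - x ^ 2 / 2 * (max (ξ i ω) 0) ^ 2)
              + (-(x ^ 2 / 2) * c i ω))) := (Real.exp_sum _ _).symm
      _ = Real.exp (x * S ω - x ^ 2 / 2 * B ω) := by
            congr 1
            simp only [hS, hB, hc]
            rw [Finset.sum_add_distrib, Finset.sum_sub_distrib,
              ← Finset.mul_sum, ← Finset.mul_sum, ← Finset.mul_sum]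
            ring
  have hIndLe : ∀ ω, Set.indicator A (fun _ => Real.exp (x ^ 2 * y / 2)) ω ≤ M n ω := by
    intro ω
    by_cases hω : ω ∈ A
    · rw [Set.indicator_of_mem hω, hMexp ω]
      apply Real.exp_le_exp.2
      obtain ⟨h1, h2⟩ := hω
      have h3 := mul_le_mul_of_nonneg_left h1 hx.le
      have h4 := mul_le_mul_of_nonneg_left h2 (sq_nonneg x)
      nlinarith
    · rw [Set.indicator_of_notMem hω]
      exact (hMpos n ω).le
  have hfinal : Real.exp (x ^ 2 * y / 2) * (μ A).toReal ≤ 1 := by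
    have hIi : ∫ ω, Set.indicator A (fun _ => Real.exp (x ^ 2 * y / 2)) ω ∂μ
        = (μ A).toReal * Real.exp (x ^ 2 * y / 2) := by
      rw [integral_indicator_const _ hAmeas]
      simp [smul_eq_mul, measureReal_def]
    have hIle : ∫ ω, Set.indicator A (fun _ => Real.exp (x ^ 2 * y / 2)) ω ∂μ
        ≤ ∫ ω, M n ω ∂μ :=
      integral_mono ((integrable_const _).indicator hAmeas) (hMint n) hIndLe
    have := le_trans hIle (key n)
    rw [hIi] at this
    linarith
  have hepos := Real.exp_pos (x ^ 2 * y / 2)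
  have : (μ A).toReal ≤ 1 / Real.exp (x ^ 2 * y / 2) := by
    rw [le_div_iff₀ hepos]
    linarith [hfinal]
  calc (μ A).toReal ≤ 1 / Real.exp (x ^ 2 * y / 2) := this
    _ = Real.exp (-(x ^ 2 * y) / 2) := by
        rw [one_div, ← Real.exp_neg]
        congr 1
        ring
end
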